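/- For the heat-equation symbol with the older D₀-based scheme: for z ∈ ℝ and k ≥ 1, ∑_{p=1}^{k} (z²/(1+z²))^p = z²(1 − (z²/(1+z²))^k), and the corresponding amplification factor Q̂_old(z) = 1 − β z²(1 − (z²/(1+z²))^k) satisfies |Q̂_old(z)| ≤ 1 for all z ∈ ℝ whenever 0 < β ≤ 2/k. -/

import Mathlib

theorem old_scheme_stability (z : ℝ) (k : ℕ) (hk : 1 ≤ k) :
    (∑ p ∈ Finset.Icc 1 k, (z ^ 2 / (1 + z ^ 2)) ^ p
      = z ^ 2 * (1 - (z ^ 2 / (1 + z ^ 2)) ^ k)) ∧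
    (∀ β : ℝ, 0 < β → β ≤ 2 / (k : ℝ) →
      |1 - β * (z ^ 2 * (1 - (z ^ 2 / (1 + z ^ 2)) ^ k))| ≤ 1) := by
  have hz : (0:ℝ) < 1 + z ^ 2 := by positivity
  set r : ℝ := z ^ 2 / (1 + z ^ 2) with hr
  have hr0 : 0 ≤ r := by positivity
  have hr1 : r < 1 := by
    rw [hr, div_lt_one hz]; nlinarith [sq_nonneg z]
  have hrne : (1:ℝ) - r ≠ 0 := by linarith
  have hsum : ∑ p ∈ Finset.Icc 1 k, r ^ p = z ^ 2 * (1 - r ^ k) := by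
    have h1 : ∑ p ∈ Finset.Icc 1 k, r ^ p = r * ∑ i ∈ Finset.range k, r ^ i := by
      rw [← Finset.Ico_add_one_right_eq_Icc, Finset.sum_Ico_eq_sum_range, Finset.mul_sum]
      simp [pow_add, pow_succ, mul_comm]
    rw [h1, geom_sum_eq hr1.ne]
    have hrr : r = z ^ 2 / (1 + z ^ 2) := hr
    have key : r * (1 + z ^ 2) = z ^ 2 := by rw [hrr]; exact div_mul_cancel₀ _ hz.ne'
    rw [mul_div_assoc', div_eq_iff (sub_ne_zero.mpr hr1.ne)]
    linear_combination (r ^ k - 1) * key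
  refine ⟨hsum, ?_⟩
  intro β hβ0 hβ2
  have hS0 : 0 ≤ z ^ 2 * (1 - r ^ k) := by
    have : r ^ k ≤ 1 := pow_le_one₀ hr0 hr1.le
    nlinarith [sq_nonneg z]
  have hSk : z ^ 2 * (1 - r ^ k) ≤ (k : ℝ) := by
    rw [← hsum]
    calc ∑ p ∈ Finset.Icc 1 k, r ^ p ≤ ∑ p ∈ Finset.Icc 1 k, (1:ℝ) := by
          refine Finset.sum_le_sum fun i _ => pow_le_one₀ hr0 hr1.le
      _ = (k : ℝ) := by simp
  have hk0 : (0:ℝ) < k := by exact_mod_cast hk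
  have h2 : β * (z ^ 2 * (1 - r ^ k)) ≤ 2 := by
    calc β * (z ^ 2 * (1 - r ^ k)) ≤ (2 / k) * (k : ℝ) := by
          apply mul_le_mul hβ2 hSk hS0 (by positivity)
      _ = 2 := by field_simp
  have h0 : 0 ≤ β * (z ^ 2 * (1 - r ^ k)) := by positivity
  rw [abs_le]; constructor <;> linarith
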